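/- Let L be the first-order language with one binary function symbol, one constant symbol, and one unary relation symbol, and let A ⊆ ℕ. Make ℤ an L-structure by interpreting the binary function as addition, the constant as 0, and the unary relation as the set A (viewed as a subset of ℤ). If the set {x ∈ ℤ : x ≥ 0} is not a definable subset of ℤ with parameters from ℤ in this structure, then A is δ̲-sparse: for every n ≥ 1, the lower asymptotic density of Σ_n(A) is 0. -/

import Mathlib

open Filter

/-- The `k`-fold sumset `X + ⋯ + X` (`k` times) of a set of naturals. -/
def kFoldN (X : Set ℕ) (k : ℕ) : Set ℕ :=
  {z : ℕ | ∃ f : Fin k → ℕ, (∀ i, f i ∈ X) ∧ z = ∑ i, f i}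

/-- `Σ_n(X) = ⋃_{k=1}^n k(X)` for `X ⊆ ℕ`. -/
def sigmaSumN (n : ℕ) (X : Set ℕ) : Set ℕ :=
  ⋃ k ∈ Finset.Icc 1 n, kFoldN X k

/-- The lower asymptotic density of a set of naturals:
`liminf_{n → ∞} |A ∩ {1,…,n}| / n`. -/
noncomputable def lowerDensity (A : Set ℕ) : ℝ :=
  Filter.liminf (fun n : ℕ => (Set.ncard (A ∩ Set.Icc 1 n) : ℝ) / n) Filter.atTop

/-- The language with one binary function symbol, one constant symbol, and one unary
relation symbol. -/
def LZA : FirstOrder.Language where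
  Functions := fun n => match n with
    | 0 => Unit
    | 2 => Unit
    | _ => Empty
  Relations := fun n => match n with
    | 1 => Unit
    | _ => Empty

/-- The `LZA`-structure on `ℤ` interpreting the binary function as `+`, the constant as `0`,
and the unary relation as `A ⊆ ℕ` viewed as a subset of `ℤ`. -/
def zStructure (A : Set ℕ) : LZA.Structure ℤ where
  funMap {n} f x :=
    match n, f, x with
    | 0, _, _ => 0
    | 2, _, x => x 0 + x 1
  RelMap {n} r x :=
    match n, r, x with
    | 1, _, x => ∃ m ∈ A, (m : ℤ) = x 0

open FirstOrder FirstOrder.Language Pointwise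

noncomputable def cnt (X : Set ℕ) (n : ℕ) : ℕ := (X ∩ Set.Icc 1 n).ncard


lemma cnt_eq_card (X : Set ℕ) (n : ℕ) [DecidablePred (· ∈ X)] :
    cnt X n = ((Finset.Icc 1 n).filter (· ∈ X)).card := by
  rw [cnt]
  have : X ∩ Set.Icc 1 n = ↑((Finset.Icc 1 n).filter (· ∈ X)) := by
    ext y; simp only [Set.mem_inter_iff, Set.mem_Icc, Finset.coe_filter, Finset.mem_Icc,
      Set.mem_setOf_eq]; tauto
  rw [this, Set.ncard_coe_finset]

lemma cnt_le_self (X : Set ℕ) (n : ℕ) : cnt X n ≤ n := by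
  classical
  rw [cnt_eq_card]
  calc ((Finset.Icc 1 n).filter (· ∈ X)).card ≤ (Finset.Icc 1 n).card :=
        Finset.card_filter_le _ _
    _ = n := by rw [Nat.card_Icc]; omega

lemma cnt_mono_set {X Y : Set ℕ} (h : X ⊆ Y) (n : ℕ) : cnt X n ≤ cnt Y n := by
  classical
  rw [cnt_eq_card, cnt_eq_card]
  refine Finset.card_le_card ?_
  intro x hx
  simp only [Finset.mem_filter] at hx ⊢
  exact ⟨hx.1, h hx.2⟩

lemma cnt_succ_mem (X : Set ℕ) {n : ℕ} (h : n + 1 ∈ X) : cnt X (n + 1) = cnt X n + 1 := by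
  classical
  rw [cnt_eq_card, cnt_eq_card]
  have : Finset.Icc 1 (n+1) = insert (n+1) (Finset.Icc 1 n) := by
    ext y; simp [Finset.mem_Icc]; omega
  rw [this, Finset.filter_insert, if_pos h, Finset.card_insert_of_notMem (by simp [Finset.mem_Icc])]

lemma cnt_succ_not_mem (X : Set ℕ) {n : ℕ} (h : n + 1 ∉ X) : cnt X (n + 1) = cnt X n := by
  classical
  rw [cnt_eq_card, cnt_eq_card]
  have : Finset.Icc 1 (n+1) = insert (n+1) (Finset.Icc 1 n) := by
    ext y; simp [Finset.mem_Icc]; omega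
  rw [this, Finset.filter_insert, if_neg h]

lemma one_le_cnt {X : Set ℕ} (h1 : 1 ∈ X) {m : ℕ} (hm : 1 ≤ m) : 1 ≤ cnt X m := by
  classical
  rw [cnt_eq_card]
  refine Finset.card_pos.2 ⟨1, ?_⟩
  simp [Finset.mem_Icc, h1, hm]

lemma cnt_congr_of_max {X : Set ℕ} {x n : ℕ} (hxn : x ≤ n)
    (hmax : ∀ y ∈ X, y ≤ n → y ≤ x) : cnt X n = cnt X x := by
  classical
  rw [cnt_eq_card, cnt_eq_card]
  congr 1
  ext y
  simp only [Finset.mem_filter, Finset.mem_Icc]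
  constructor
  · rintro ⟨⟨h1, h2⟩, h3⟩; exact ⟨⟨h1, hmax y h3 h2⟩, h3⟩
  · rintro ⟨⟨h1, h2⟩, h3⟩; exact ⟨⟨h1, h2.trans hxn⟩, h3⟩

lemma schnirelmann_step (X Y : Set ℕ) (h0X : 0 ∈ X) (h0Y : 0 ∈ Y) (K : ℕ) (hK : 1 ≤ K)
    (hY : ∀ m : ℕ, 1 ≤ m → (m : ℤ) ≤ K * cnt Y m) (n : ℕ) :
    (K : ℤ) * (n - cnt (X + Y) n) ≤ ((K : ℤ) - 1) * (n - cnt X n) := by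
  classical
  induction n using Nat.strong_induction_on with
  | _ n IH =>
  rcases Nat.eq_zero_or_pos n with rfl | hn
  · simp [cnt, Set.Icc_eq_empty_of_lt]
  by_cases hnX : n ∈ X
  · -- n ∈ X, so n ∈ X + Y
    have hnZ : n ∈ X + Y := ⟨n, hnX, 0, h0Y, add_zero n⟩
    obtain ⟨m, rfl⟩ : ∃ m, n = m + 1 := ⟨n-1, by omega⟩
    have e1 : cnt X (m+1) = cnt X m + 1 := cnt_succ_mem X hnX
    have e2 : cnt (X+Y) (m+1) = cnt (X+Y) m + 1 := cnt_succ_mem _ hnZ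
    have hIH := IH m (by omega)
    rw [e1, e2]
    push_cast
    push_cast at hIH
    linarith
  · -- take x = max of X ∩ [0,n]
    classical
    have hne : ((Finset.range (n+1)).filter (· ∈ X)).Nonempty := ⟨0, by simp [h0X]⟩
    obtain ⟨x, hxmem, hxmax⟩ : ∃ x ∈ (Finset.range (n+1)).filter (· ∈ X),
        ∀ y ∈ (Finset.range (n+1)).filter (· ∈ X), y ≤ x :=
      ⟨_, Finset.max'_mem _ hne, fun y hy => Finset.le_max' _ y hy⟩
    simp only [Finset.mem_filter, Finset.mem_range] at hxmem
    have hxX : x ∈ X := hxmem.2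
    have hxn : x ≤ n := by omega
    have hmax : ∀ y ∈ X, y ≤ n → y ≤ x := by
      intro y hy hyn
      exact hxmax y (by simp [Finset.mem_range, hy]; omega)
    have hxlt : x < n := lt_of_le_of_ne hxn (by rintro rfl; exact hnX hxX)
    obtain ⟨g, hgdef⟩ : ∃ g, g = n - x := ⟨n - x, rfl⟩
    have hg1 : 1 ≤ g := by omega
    have hIH := IH x (by omega)
    have hYg := hY g hg1
    have e1 : cnt X n = cnt X x := cnt_congr_of_max hxn hmax
    -- counting in X+Y
    have e2 : cnt (X+Y) x + cnt Y g ≤ cnt (X+Y) n := by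
      rw [cnt_eq_card, cnt_eq_card, cnt_eq_card]
      set S1 := (Finset.Icc 1 x).filter (· ∈ X + Y) with hS1
      set S2 := ((Finset.Icc 1 g).filter (· ∈ Y)).image (fun y => x + y) with hS2
      have hsub : S1 ∪ S2 ⊆ (Finset.Icc 1 n).filter (· ∈ X + Y) := by
        intro z hz
        rcases Finset.mem_union.1 hz with hz | hz
        · simp only [hS1, Finset.mem_filter, Finset.mem_Icc] at hz ⊢
          exact ⟨⟨hz.1.1, hz.1.2.trans hxn⟩, hz.2⟩
        · simp only [hS2, Finset.mem_image, Finset.mem_filter, Finset.mem_Icc] at hz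
          obtain ⟨y, ⟨⟨hy1, hy2⟩, hyY⟩, rfl⟩ := hz
          simp only [Finset.mem_filter, Finset.mem_Icc]
          exact ⟨⟨by omega, by omega⟩, ⟨x, hxX, y, hyY, rfl⟩⟩
      have hdisj : Disjoint S1 S2 := by
        rw [Finset.disjoint_left]
        intro z hz1 hz2
        simp only [hS1, Finset.mem_filter, Finset.mem_Icc] at hz1
        simp only [hS2, Finset.mem_image, Finset.mem_filter, Finset.mem_Icc] at hz2
        obtain ⟨y, ⟨⟨hy1, _⟩, _⟩, rfl⟩ := hz2
        omega
      have hcard2 : S2.card = ((Finset.Icc 1 g).filter (· ∈ Y)).card :=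
        Finset.card_image_of_injective _ (fun a b hab => by omega)
      calc S1.card + ((Finset.Icc 1 g).filter (· ∈ Y)).card
          = (S1 ∪ S2).card := by rw [Finset.card_union_of_disjoint hdisj, hcard2]
        _ ≤ _ := Finset.card_le_card hsub
    have hnxg : (n : ℤ) = (x : ℤ) + (g : ℤ) := by omega
    have c1 : ((cnt (X+Y) x : ℤ) + (cnt Y g : ℤ)) ≤ (cnt (X+Y) n : ℤ) := by exact_mod_cast e2
    have e1' : (cnt X n : ℤ) = (cnt X x : ℤ) := by exact_mod_cast e1
    have hKnn : (0:ℤ) ≤ (K:ℤ) := by positivity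
    calc (K : ℤ) * (n - cnt (X + Y) n)
        ≤ (K : ℤ) * (n - (cnt (X+Y) x + cnt Y g)) := by
          apply mul_le_mul_of_nonneg_left _ hKnn
          linarith
      _ = (K : ℤ) * (x - cnt (X+Y) x) + ((K : ℤ) * g - K * cnt Y g) := by rw [hnxg]; ring
      _ ≤ ((K : ℤ) - 1) * (x - cnt X x) + ((K : ℤ) * g - K * cnt Y g) := by linarith
      _ ≤ ((K : ℤ) - 1) * (x - cnt X x) + ((K : ℤ) - 1) * g := by linarith
      _ = ((K : ℤ) - 1) * ((x + g) - cnt X x) := by ring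
      _ = ((K : ℤ) - 1) * (n - cnt X n) := by rw [e1', hnxg]

def sumIter (D : Set ℕ) : ℕ → Set ℕ
  | 0 => {0}
  | k+1 => sumIter D k + D

lemma zero_mem_sumIter {D : Set ℕ} (h0 : 0 ∈ D) (k : ℕ) : 0 ∈ sumIter D k := by
  induction k with
  | zero => simp [sumIter]
  | succ k ih => exact ⟨0, ih, 0, h0, rfl⟩

lemma sumIter_add (D : Set ℕ) (j k : ℕ) :
    sumIter D (j + k) = sumIter D j + sumIter D k := by
  induction k with
  | zero =>
    ext z
    simp only [Nat.add_zero, sumIter, Set.mem_add, Set.mem_singleton_iff]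
    constructor
    · intro hz; exact ⟨z, hz, 0, rfl, add_zero z⟩
    · rintro ⟨a, ha, b, rfl, rfl⟩; simpa using ha
  | succ k ih =>
    show sumIter D (j + k) + D = _
    rw [ih, add_assoc]
    rfl

lemma cnt_singleton_zero (n : ℕ) : cnt {0} n = 0 := by
  rw [cnt]
  convert Set.ncard_empty ℕ
  ext y
  simp only [Set.mem_inter_iff, Set.mem_singleton_iff, Set.mem_Icc, Set.mem_empty_iff_false,
    iff_false, not_and]
  omega

lemma sumIter_bound {D : Set ℕ} (h0 : 0 ∈ D) {K : ℕ} (hK : 1 ≤ K)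
    (hD : ∀ m : ℕ, 1 ≤ m → (m : ℤ) ≤ K * cnt D m) (k n : ℕ) :
    (K : ℤ)^k * (n - cnt (sumIter D k) n) ≤ ((K : ℤ) - 1)^k * n := by
  induction k with
  | zero => simp [sumIter, cnt_singleton_zero]
  | succ k ih =>
    have hstep := schnirelmann_step (sumIter D k) D (zero_mem_sumIter h0 k) h0 K hK hD n
    have hKk : (0:ℤ) ≤ (K:ℤ)^k := by positivity
    have hK1 : (0:ℤ) ≤ (K:ℤ) - 1 := by
      have : (1:ℤ) ≤ (K:ℤ) := by exact_mod_cast hK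
      linarith
    calc (K : ℤ)^(k+1) * (n - cnt (sumIter D (k+1)) n)
        = (K:ℤ)^k * ((K:ℤ) * (n - cnt (sumIter D k + D) n)) := by
          rw [show sumIter D (k+1) = sumIter D k + D from rfl, pow_succ]; ring
      _ ≤ (K:ℤ)^k * (((K:ℤ) - 1) * (n - cnt (sumIter D k) n)) :=
          mul_le_mul_of_nonneg_left hstep hKk
      _ = ((K:ℤ) - 1) * ((K:ℤ)^k * (n - cnt (sumIter D k) n)) := by ring
      _ ≤ ((K:ℤ) - 1) * (((K : ℤ) - 1)^k * n) := mul_le_mul_of_nonneg_left ih hK1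
      _ = ((K : ℤ) - 1)^(k+1) * n := by ring

lemma aux_pow (a : ℕ) : ∀ j : ℕ, (a + j) * a ^ j ≤ a * (a + 1) ^ j := by
  intro j
  induction j with
  | zero => simp
  | succ j ih =>
    have h1 : (a + (j+1)) * a ^ (j+1) = (a + j) * a ^ j * a + a ^ (j+1) := by ring
    have h2 : a * (a + 1) ^ (j+1) = a * (a+1)^j * (a+1) := by ring
    have h3 : (a + j) * a ^ j * a + a ^ (j+1) ≤ a * (a+1)^j * a + a^(j+1) :=
      Nat.add_le_add_right (Nat.mul_le_mul_right a ih) _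
    have h4 : a ^ (j+1) ≤ a * (a+1)^j := by
      calc a ^ (j+1) = a * a ^ j := by ring
        _ ≤ a * (a+1)^j := Nat.mul_le_mul_left a (Nat.pow_le_pow_left (by omega) j)
    calc (a + (j+1)) * a ^ (j+1) = (a + j) * a ^ j * a + a ^ (j+1) := h1
      _ ≤ a * (a+1)^j * a + a^(j+1) := h3
      _ ≤ a * (a+1)^j * a + a * (a+1)^j := Nat.add_le_add_left h4 _
      _ = a * (a + 1) ^ (j+1) := by ring

lemma exists_doubling {K : ℕ} (hK : 1 ≤ K) :
    ∃ k : ℕ, 1 ≤ k ∧ 2 * ((K : ℤ) - 1)^k ≤ (K : ℤ)^k := by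
  rcases Nat.eq_or_lt_of_le hK with rfl | hK2
  · exact ⟨1, le_refl 1, by norm_num⟩
  obtain ⟨m, rfl⟩ : ∃ m, K = m + 1 := ⟨K - 1, by omega⟩
  have hm : 1 ≤ m := by omega
  refine ⟨m, hm, ?_⟩
  have := aux_pow m m
  have h2 : 2 * m ^ m * m ≤ (m+1) ^ m * m := by
    calc 2 * m ^ m * m = (m + m) * m ^ m := by ring
      _ ≤ m * (m+1)^m := this
      _ = (m+1)^m * m := by ring
  have h3 : 2 * m ^ m ≤ (m+1) ^ m := Nat.le_of_mul_le_mul_right h2 (by omega)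
  have : ((m:ℤ) + 1) - 1 = (m:ℤ) := by ring
  push_cast
  rw [this]
  exact_mod_cast h3

lemma sumIter_half {D : Set ℕ} (h0 : 0 ∈ D) {K : ℕ} (hK : 1 ≤ K)
    (hD : ∀ m : ℕ, 1 ≤ m → (m : ℤ) ≤ K * cnt D m) :
    ∃ k : ℕ, 1 ≤ k ∧ ∀ n : ℕ, 1 ≤ n → (n : ℤ) ≤ 2 * cnt (sumIter D k) n := by
  obtain ⟨k, hk1, hk⟩ := exists_doubling hK
  refine ⟨k, hk1, fun n hn => ?_⟩
  have hb := sumIter_bound h0 hK hD k n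
  have hKk : (0:ℤ) < (K:ℤ)^k := by positivity
  have hK1 : (0:ℤ) ≤ (K:ℤ) - 1 := by
    have : (1:ℤ) ≤ (K:ℤ) := by exact_mod_cast hK
    linarith
  have hnn : (0:ℤ) ≤ (n:ℤ) := by positivity
  -- 2 * K^k * (n - c) ≤ 2 * (K-1)^k * n ≤ K^k * n
  have h1 : 2 * ((K:ℤ)^k * ((n:ℤ) - cnt (sumIter D k) n)) ≤ 2 * (((K : ℤ) - 1)^k * n) := by
    linarith
  have h2 : 2 * (((K : ℤ) - 1)^k * n) ≤ (K:ℤ)^k * n := by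
    calc 2 * (((K : ℤ) - 1)^k * n) = (2 * ((K : ℤ) - 1)^k) * n := by ring
      _ ≤ (K:ℤ)^k * n := mul_le_mul_of_nonneg_right hk hnn
  have h3 : (K:ℤ)^k * (2 * ((n:ℤ) - cnt (sumIter D k) n)) ≤ (K:ℤ)^k * n := by
    calc (K:ℤ)^k * (2 * ((n:ℤ) - cnt (sumIter D k) n))
        = 2 * ((K:ℤ)^k * ((n:ℤ) - cnt (sumIter D k) n)) := by ring
      _ ≤ (K:ℤ)^k * n := h1.trans h2
  have h4 : 2 * ((n:ℤ) - cnt (sumIter D k) n) ≤ (n:ℤ) :=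
    le_of_mul_le_mul_left h3 hKk
  linarith

lemma schnirelmann_complete {X : Set ℕ} (h0 : 0 ∈ X)
    (h2 : ∀ n : ℕ, 1 ≤ n → (n : ℤ) ≤ 2 * cnt X n) (n : ℕ) : n ∈ X + X := by
  classical
  rcases Nat.eq_zero_or_pos n with rfl | hn
  · exact ⟨0, h0, 0, h0, rfl⟩
  by_cases hnX : n ∈ X
  · exact ⟨n, hnX, 0, h0, add_zero n⟩
  set S := (Finset.Icc 1 (n-1)).filter (· ∈ X) with hS
  set T := S.image (fun s => n - s) with hT
  have hfil : (Finset.Icc 1 n).filter (· ∈ X) = (Finset.Icc 1 (n-1)).filter (· ∈ X) := by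
    ext y
    simp only [Finset.mem_filter, Finset.mem_Icc]
    constructor
    · rintro ⟨⟨h1', h2'⟩, h3⟩
      have hyn : y ≠ n := fun h => hnX (h ▸ h3)
      exact ⟨⟨h1', by omega⟩, h3⟩
    · rintro ⟨⟨h1', h2'⟩, h3⟩; exact ⟨⟨h1', by omega⟩, h3⟩
  have hcnt : cnt X n = S.card := by
    rw [cnt_eq_card, hfil, ← hS]
  have hSsub : S ⊆ Finset.Icc 1 (n-1) := Finset.filter_subset _ _
  have hTsub : T ⊆ Finset.Icc 1 (n-1) := by
    intro z hz
    simp only [hT, Finset.mem_image] at hz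
    obtain ⟨s, hs, rfl⟩ := hz
    have := hSsub hs
    simp only [Finset.mem_Icc] at this ⊢
    omega
  have hTcard : T.card = S.card := by
    rw [hT]
    apply Finset.card_image_of_injOn
    intro a ha b hb hab
    have ha' := hSsub ha; have hb' := hSsub hb
    simp only [Finset.mem_Icc] at ha' hb'
    dsimp only at hab
    omega
  by_cases hdisj : Disjoint S T
  · exfalso
    have hcard : (S ∪ T).card = S.card + T.card := Finset.card_union_of_disjoint hdisj
    have hle : (S ∪ T).card ≤ n - 1 := by
      have := Finset.card_le_card (Finset.union_subset hSsub hTsub)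
      simpa [Nat.card_Icc] using this
    have h2n := h2 n hn
    rw [hcnt] at h2n
    have : (n:ℤ) ≤ 2 * S.card := h2n
    omega
  · rw [Finset.not_disjoint_iff] at hdisj
    obtain ⟨a, haS, haT⟩ := hdisj
    have haX : a ∈ X := (Finset.mem_filter.1 haS).2
    simp only [hT, Finset.mem_image] at haT
    obtain ⟨b, hbS, hba⟩ := haT
    have hbX : b ∈ X := (Finset.mem_filter.1 hbS).2
    have hb' := hSsub hbS
    simp only [Finset.mem_Icc] at hb'
    have hba' : n - b = a := hba
    exact ⟨b, hbX, a, haX, by show b + a = n; omega⟩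

lemma kFoldN_zero (X : Set ℕ) : kFoldN X 0 = {0} := by
  ext z
  constructor
  · rintro ⟨f, hf, rfl⟩; simp
  · rintro rfl; exact ⟨finZeroElim, fun i => i.elim0, by simp⟩

lemma kFoldN_succ (X : Set ℕ) (k : ℕ) : kFoldN X (k + 1) = kFoldN X k + X := by
  ext z
  constructor
  · rintro ⟨f, hf, rfl⟩
    refine ⟨∑ i : Fin k, f i.castSucc, ⟨fun i => f i.castSucc, fun i => hf _, rfl⟩,
      f (Fin.last k), hf _, ?_⟩
    rw [Fin.sum_univ_castSucc]
  · rintro ⟨y, ⟨f, hf, rfl⟩, a, ha, rfl⟩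
    refine ⟨Fin.snoc f a, fun i => ?_, ?_⟩
    · rcases Fin.eq_castSucc_or_eq_last i with ⟨j, rfl⟩ | rfl
      · simpa using hf j
      · simpa using ha
    · rw [Fin.sum_univ_castSucc]
      simp

lemma mem_sigmaSumN {X : Set ℕ} {a z : ℕ} :
    z ∈ sigmaSumN a X ↔ ∃ k, 1 ≤ k ∧ k ≤ a ∧ z ∈ kFoldN X k := by
  simp [sigmaSumN, Finset.mem_Icc]
  tauto

lemma sigma_mono {X : Set ℕ} {a b : ℕ} (h : a ≤ b) : sigmaSumN a X ⊆ sigmaSumN b X := by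
  intro z hz
  rw [mem_sigmaSumN] at hz ⊢
  obtain ⟨k, h1, h2, h3⟩ := hz
  exact ⟨k, h1, h2.trans h, h3⟩

lemma kFold_add {X : Set ℕ} {j l u v : ℕ} (hu : u ∈ kFoldN X j) (hv : v ∈ kFoldN X l) :
    u + v ∈ kFoldN X (j + l) := by
  obtain ⟨f, hf, rfl⟩ := hu
  obtain ⟨g, hg, rfl⟩ := hv
  refine ⟨Fin.append f g, fun i => ?_, ?_⟩
  · refine Fin.addCases (fun i => ?_) (fun i => ?_) i
    · rw [Fin.append_left]; exact hf i
    · rw [Fin.append_right]; exact hg i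
  · rw [Fin.sum_univ_add]
    simp [Fin.append_left, Fin.append_right]

lemma sigma_add_mem {X : Set ℕ} {a b u v : ℕ} (hu : u ∈ sigmaSumN a X)
    (hv : v ∈ sigmaSumN b X) : u + v ∈ sigmaSumN (a + b) X := by
  rw [mem_sigmaSumN] at hu hv ⊢
  obtain ⟨j, hj1, hj2, hj3⟩ := hu
  obtain ⟨l, hl1, hl2, hl3⟩ := hv
  exact ⟨j + l, by omega, by omega, kFold_add hj3 hl3⟩

lemma sigma_dvd {X : Set ℕ} {g : ℕ} (hg : ∀ x ∈ X, g ∣ x) {a z : ℕ}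
    (hz : z ∈ sigmaSumN a X) : g ∣ z := by
  rw [mem_sigmaSumN] at hz
  obtain ⟨k, _, _, f, hf, rfl⟩ := hz
  exact Finset.dvd_sum fun i _ => hg _ (hf i)

lemma list_sum_mem_kFold {X : Set ℕ} : ∀ {l : List ℕ}, (∀ y ∈ l, y ∈ X) → l ≠ [] →
    l.sum ∈ kFoldN X l.length := by
  intro l
  induction l with
  | nil => intro _ h; exact absurd rfl h
  | cons a l ih =>
    intro hl _
    rcases l with _ | ⟨b, l'⟩
    · refine ⟨fun _ => a, fun i => hl a (by simp), by simp⟩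
    · have hsum : (a :: (b :: l')).sum = (b :: l').sum + a := by simp [List.sum_cons]; ring
      have hlen : (a :: (b :: l')).length = (b :: l').length + 1 := rfl
      rw [hsum, hlen, kFoldN_succ]
      exact ⟨(b :: l').sum, ih (fun y hy => hl y (by simp [hy])) (by simp),
        a, hl a (by simp), rfl⟩

lemma closure_add_mem_sigma {A : Set ℕ} {a1 : ℕ} (ha1 : a1 ∈ A) {x : ℕ}
    (hx : x ∈ AddSubmonoid.closure A) : ∃ m, 1 ≤ m ∧ x + a1 ∈ sigmaSumN m A := by
  obtain ⟨l, hl, rfl⟩ := AddSubmonoid.exists_list_of_mem_closure hx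
  refine ⟨l.length + 1, by omega, ?_⟩
  rw [mem_sigmaSumN]
  refine ⟨l.length + 1, by omega, le_refl _, ?_⟩
  have : l.sum + a1 = (a1 :: l).sum := by simp [List.sum_cons]; ring
  rw [this]
  refine list_sum_mem_kFold (l := a1 :: l) ?_ (by simp)
  intro y hy
  rcases List.mem_cons.1 hy with rfl | hy
  · exact ha1
  · exact hl y hy

lemma closure_dvd {A : Set ℕ} {g : ℕ} (hg : ∀ a ∈ A, g ∣ a) {x : ℕ}
    (hx : x ∈ AddSubmonoid.closure A) : g ∣ x := by
  induction hx using AddSubmonoid.closure_induction with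
  | mem a ha => exact hg a ha
  | zero => exact dvd_zero g
  | add a b _ _ iha ihb => exact dvd_add iha ihb

lemma finset_bezout (F : Finset ℕ) : ∃ P Q : ℕ, (P : ℤ) = (Q : ℤ) + ((F.gcd id : ℕ) : ℤ) ∧
    P ∈ AddSubmonoid.closure (F : Set ℕ) ∧ Q ∈ AddSubmonoid.closure (F : Set ℕ) := by
  classical
  induction F using Finset.induction_on with
  | empty => exact ⟨0, 0, by simp, AddSubmonoid.zero_mem _, AddSubmonoid.zero_mem _⟩
  | @insert a F ha ih =>
    obtain ⟨P, Q, hPQ, hP, hQ⟩ := ih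
    set d := F.gcd id with hd
    have hgcd : (insert a F).gcd id = Nat.gcd a d := by rw [Finset.gcd_insert]; rfl
    set x := Nat.gcdA a d with hxd
    set y := Nat.gcdB a d with hyd
    have hB : ((Nat.gcd a d : ℕ) : ℤ) = a * x + d * y := Nat.gcd_eq_gcd_ab a d
    have hsub : (F : Set ℕ) ⊆ (↑(insert a F) : Set ℕ) := by
      simp only [Finset.coe_insert]; exact Set.subset_insert a F
    have hmem : ∀ b ∈ AddSubmonoid.closure (F : Set ℕ),
        b ∈ AddSubmonoid.closure (↑(insert a F) : Set ℕ) :=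
      fun b hb => AddSubmonoid.closure_mono hsub hb
    have hamem : a ∈ AddSubmonoid.closure (↑(insert a F) : Set ℕ) :=
      AddSubmonoid.subset_closure (by simp)
    have hmul : ∀ b c : ℕ, b ∈ AddSubmonoid.closure (↑(insert a F) : Set ℕ) →
        b * c ∈ AddSubmonoid.closure (↑(insert a F) : Set ℕ) := by
      intro b c hb
      simpa [smul_eq_mul, mul_comm] using AddSubmonoid.nsmul_mem (S := AddSubmonoid.closure (↑(insert a F) : Set ℕ)) hb c
    refine ⟨a * x.toNat + P * y.toNat + Q * (-y).toNat,
           a * (-x).toNat + P * (-y).toNat + Q * y.toNat, ?_, ?_, ?_⟩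
    · have hx : (x.toNat : ℤ) - ((-x).toNat : ℤ) = x := by omega
      have hy : (y.toNat : ℤ) - ((-y).toNat : ℤ) = y := by omega
      rw [hgcd]
      push_cast
      linear_combination (a:ℤ) * hx + ((P:ℤ) - Q) * hy + (y:ℤ) * hPQ - hB
    · exact AddSubmonoid.add_mem _ (AddSubmonoid.add_mem _ (hmul a _ hamem)
        (hmul P _ (hmem P hP))) (hmul Q _ (hmem Q hQ))
    · exact AddSubmonoid.add_mem _ (AddSubmonoid.add_mem _ (hmul a _ hamem)
        (hmul P _ (hmem P hP))) (hmul Q _ (hmem Q hQ))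

lemma gcd_exists (A : Set ℕ) (a1 : ℕ) (ha1 : a1 ∈ A) (hne : a1 ≠ 0) :
    ∃ g0, 1 ≤ g0 ∧ (∀ a ∈ A, g0 ∣ a) ∧
      ∃ s m1, 1 ≤ m1 ∧ g0 * s ∈ sigmaSumN m1 A ∧ g0 * (s + 1) ∈ sigmaSumN m1 A := by
  classical
  set S : Set ℕ := {d | 0 < d ∧ ∃ F : Finset ℕ, ↑F ⊆ A ∧ F.gcd id = d} with hSdef
  have hSne : S.Nonempty := by
    refine ⟨a1, by omega, {a1}, by simpa using ha1, by simp⟩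
  set g0 := sInf S with hg0def
  have hg0S : g0 ∈ S := Nat.sInf_mem hSne
  obtain ⟨hg0pos, F, hFA, hFg⟩ := hg0S
  have hdvd : ∀ a ∈ A, g0 ∣ a := by
    intro a haA
    have hgcd : (insert a F).gcd id = Nat.gcd a g0 := by rw [Finset.gcd_insert, hFg]; rfl
    have hd'S : Nat.gcd a g0 ∈ S := by
      refine ⟨Nat.gcd_pos_of_pos_right a hg0pos, insert a F, ?_, hgcd⟩
      intro z hz
      rcases Finset.mem_insert.1 (by exact_mod_cast hz) with rfl | hz'
      · exact haA
      · exact hFA hz'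
    have h1 : g0 ≤ Nat.gcd a g0 := Nat.sInf_le hd'S
    have h2 : Nat.gcd a g0 ∣ g0 := Nat.gcd_dvd_right a g0
    have h3 : Nat.gcd a g0 ≤ g0 := Nat.le_of_dvd hg0pos h2
    have : Nat.gcd a g0 = g0 := le_antisymm h3 h1
    rw [← this]
    exact Nat.gcd_dvd_left a g0
  obtain ⟨P, Q, hPQ, hP, hQ⟩ := finset_bezout F
  have hPA : P ∈ AddSubmonoid.closure A := AddSubmonoid.closure_mono hFA hP
  have hQA : Q ∈ AddSubmonoid.closure A := AddSubmonoid.closure_mono hFA hQ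
  obtain ⟨mQ, hmQ1, hmQ⟩ := closure_add_mem_sigma ha1 hQA
  obtain ⟨mP, hmP1, hmP⟩ := closure_add_mem_sigma ha1 hPA
  have hQdvd : g0 ∣ Q + a1 := dvd_add (closure_dvd hdvd hQA) (hdvd a1 ha1)
  obtain ⟨s, hs⟩ := hQdvd
  have hPval : P = Q + g0 := by rw [hFg] at hPQ; exact_mod_cast hPQ
  refine ⟨g0, hg0pos, hdvd, s, max mQ mP, by omega, ?_, ?_⟩
  · rw [← hs]
    exact sigma_mono (le_max_left _ _) hmQ
  · have : g0 * (s + 1) = P + a1 := by rw [hPval, Nat.mul_succ, ← hs]; ring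
    rw [this]
    exact sigma_mono (le_max_right _ _) hmP

lemma lowerDensity_eq (C : Set ℕ) :
    lowerDensity C = Filter.liminf (fun n : ℕ => (cnt C n : ℝ) / n) Filter.atTop := rfl

lemma cnt_div_le_one (C : Set ℕ) (n : ℕ) : (cnt C n : ℝ) / n ≤ 1 := by
  rcases Nat.eq_zero_or_pos n with rfl | hn
  · simp
  · have h1 : (cnt C n : ℝ) ≤ n := by exact_mod_cast cnt_le_self C n
    have h2 : (0:ℝ) < n := by exact_mod_cast hn
    rw [div_le_one h2]
    exact h1

lemma cnt_bdd (C : Set ℕ) :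
    Filter.IsBoundedUnder (· ≤ ·) Filter.atTop (fun n : ℕ => (cnt C n : ℝ) / n) :=
  Filter.isBoundedUnder_of ⟨1, fun n => cnt_div_le_one C n⟩

lemma lowerDensity_nonneg (C : Set ℕ) : 0 ≤ lowerDensity C := by
  rw [lowerDensity_eq]
  refine Filter.le_liminf_of_le ((cnt_bdd C).isCoboundedUnder_ge) ?_
  filter_upwards with n
  positivity

lemma lowerDensity_zero_of_subsingleton {C : Set ℕ} (h : ∀ a ∈ C, a = 0) :
    lowerDensity C = 0 := by
  have hz : ∀ n : ℕ, cnt C n = 0 := by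
    intro n
    have he : C ∩ Set.Icc 1 n = ∅ := by
      ext y
      simp only [Set.mem_inter_iff, Set.mem_Icc, Set.mem_empty_iff_false, iff_false, not_and]
      intro hy
      have := h y hy
      omega
    rw [cnt, he, Set.ncard_empty]
  rw [lowerDensity_eq]
  have : (fun n : ℕ => (cnt C n : ℝ) / n) = fun _ => 0 := by
    funext n; rw [hz]; simp
  rw [this, Filter.liminf_const]

lemma exists_K1 {C : Set ℕ} (hpos : 0 < lowerDensity C) :
    ∃ K1 N0 : ℕ, 1 ≤ K1 ∧ ∀ m : ℕ, N0 ≤ m → (m : ℤ) ≤ K1 * cnt C m := by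
  set L := lowerDensity C with hL
  have hev : ∀ᶠ n in Filter.atTop, L / 2 < (cnt C n : ℝ) / n := by
    refine Filter.eventually_lt_of_lt_liminf ?_
      (Filter.isBoundedUnder_of ⟨0, fun n => by positivity⟩)
    rw [← lowerDensity_eq]
    linarith
  obtain ⟨N0', hN0⟩ := Filter.eventually_atTop.1 hev
  set K1 := ⌈2 / L⌉₊ + 1 with hK1
  refine ⟨K1, max N0' 1, by omega, ?_⟩
  intro m hm
  have hm1 : 1 ≤ m := le_trans (le_max_right _ _) hm
  have hmN : N0' ≤ m := le_trans (le_max_left _ _) hm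
  have hmpos : (0:ℝ) < m := by exact_mod_cast hm1
  have h := hN0 m hmN
  have hL2 : (0:ℝ) < L / 2 := by linarith
  have hcnt : L / 2 * m < cnt C m := by
    rw [lt_div_iff₀ hmpos] at h
    linarith
  have hK1L : 2 / L ≤ (K1 : ℝ) := by
    calc 2 / L ≤ (⌈2 / L⌉₊ : ℝ) := Nat.le_ceil _
      _ ≤ K1 := by rw [hK1]; push_cast; linarith
  have : (m : ℝ) ≤ K1 * cnt C m := by
    have h2L : (m : ℝ) = (2 / L) * (L / 2 * m) := by field_simp
    have hcnt' : (0:ℝ) ≤ (cnt C m : ℝ) := by positivity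
    calc (m:ℝ) = (2 / L) * (L / 2 * m) := h2L
      _ ≤ (2 / L) * cnt C m := by
          apply mul_le_mul_of_nonneg_left (le_of_lt hcnt)
          positivity
      _ ≤ K1 * cnt C m := mul_le_mul_of_nonneg_right hK1L hcnt'
  exact_mod_cast this


lemma cnt_le_of_scale {C D : Set ℕ} {g0 : ℕ} (hg : 1 ≤ g0)
    (h : ∀ z ∈ C, 1 ≤ z → g0 ∣ z ∧ z / g0 ∈ D) (m : ℕ) : cnt C m ≤ cnt D m := by
  classical
  rw [cnt_eq_card, cnt_eq_card]
  apply Finset.card_le_card_of_injOn (fun z => z / g0)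
  · intro z hz
    simp only [Finset.mem_coe, Finset.mem_filter, Finset.mem_Icc] at hz ⊢
    obtain ⟨⟨hz1, hz2⟩, hzC⟩ := hz
    obtain ⟨hdvd, hD⟩ := h z hzC hz1
    refine ⟨⟨?_, ?_⟩, hD⟩
    · rw [Nat.one_le_div_iff hg]
      exact Nat.le_of_dvd (by omega) hdvd
    · exact le_trans (Nat.div_le_self z g0) hz2
  · intro a ha b hb hab
    simp only [Finset.coe_filter, Set.mem_setOf_eq, Finset.mem_Icc] at ha hb
    obtain ⟨hda, _⟩ := h a ha.2 ha.1.1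
    obtain ⟨hdb, _⟩ := h b hb.2 hb.1.1
    dsimp only at hab
    obtain ⟨a', rfl⟩ := hda
    obtain ⟨b', rfl⟩ := hdb
    rw [Nat.mul_div_cancel_left a' (by omega), Nat.mul_div_cancel_left b' (by omega)] at hab
    rw [hab]

lemma sumIter_struct (A : Set ℕ) (g0 s m0 : ℕ) (D : Set ℕ)
    (hD : ∀ d ∈ D, d = 0 ∨ g0 * d ∈ sigmaSumN m0 A ∨ g0 * (d + s) ∈ sigmaSumN m0 A) :
    ∀ k, ∀ x ∈ sumIter D k,
      x = 0 ∨ ∃ c, c ≤ k ∧ g0 * x + g0 * (c * s) ∈ sigmaSumN (k * m0) A := by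
  intro k
  induction k with
  | zero => intro x hx; left; simpa [sumIter] using hx
  | succ k ih =>
    rintro x ⟨y, hy, d, hd, rfl⟩
    have hdc : d = 0 ∨ ∃ cd, cd ≤ 1 ∧ g0 * d + g0 * (cd * s) ∈ sigmaSumN m0 A := by
      rcases hD d hd with h | h | h
      · exact Or.inl h
      · exact Or.inr ⟨0, by omega, by simpa using h⟩
      · refine Or.inr ⟨1, le_refl 1, ?_⟩
        have : g0 * d + g0 * (1 * s) = g0 * (d + s) := by ring
        rw [this]; exact h
    rcases ih y hy with rfl | ⟨c, hc, hyc⟩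
    · rcases hdc with rfl | ⟨cd, hcd, hdm⟩
      · left; simp
      · right
        refine ⟨cd, by omega, ?_⟩
        have hsub : sigmaSumN m0 A ⊆ sigmaSumN ((k+1) * m0) A :=
          sigma_mono (by nlinarith)
        simpa using hsub hdm
    · rcases hdc with rfl | ⟨cd, hcd, hdm⟩
      · right
        refine ⟨c, by omega, ?_⟩
        have hsub : sigmaSumN (k * m0) A ⊆ sigmaSumN ((k+1) * m0) A :=
          sigma_mono (by nlinarith)
        simpa using hsub hyc
      · right
        refine ⟨c + cd, by omega, ?_⟩
        have := sigma_add_mem hyc hdm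
        have heq : g0 * y + g0 * (c * s) + (g0 * d + g0 * (cd * s))
            = g0 * (y + d) + g0 * ((c + cd) * s) := by ring
        rw [heq] at this
        have heq2 : k * m0 + m0 = (k+1) * m0 := by ring
        rw [heq2] at this
        exact this

lemma main_comb (A : Set ℕ) (n : ℕ) (hn : 1 ≤ n) (hpos : lowerDensity (sigmaSumN n A) ≠ 0) :
    ∃ g0 s KK M : ℕ, 1 ≤ g0 ∧
      ∀ x : ℕ, 1 ≤ x → ∃ c, c ≤ KK ∧ g0 * x + g0 * (c * s) ∈ sigmaSumN M A := by
  set C := sigmaSumN n A with hC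
  have hpos' : 0 < lowerDensity C := lt_of_le_of_ne (lowerDensity_nonneg C) (Ne.symm hpos)
  -- A has a nonzero element
  have hA1 : ∃ a1 ∈ A, a1 ≠ 0 := by
    by_contra hcon
    push_neg at hcon
    apply hpos
    apply lowerDensity_zero_of_subsingleton
    intro z hz
    rw [hC, mem_sigmaSumN] at hz
    obtain ⟨k, _, _, f, hf, rfl⟩ := hz
    exact Finset.sum_eq_zero fun i _ => hcon (f i) (hf i)
  obtain ⟨a1, ha1, ha1ne⟩ := hA1
  obtain ⟨g0, hg0, hdvdA, s, m1, hm1, hQs, hPs⟩ := gcd_exists A a1 ha1 ha1ne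
  obtain ⟨K1, N0, hK11, hK1⟩ := exists_K1 hpos'
  set m0 := max n m1 with hm0
  set EE := sigmaSumN m0 A with hEE
  set D : Set ℕ := {x | x = 0 ∨ g0 * x ∈ EE ∨ g0 * (x + s) ∈ EE} with hDdef
  have h0D : 0 ∈ D := Or.inl rfl
  have h1D : 1 ∈ D := by
    right; right
    show g0 * (1 + s) ∈ EE
    rw [Nat.add_comm 1 s]
    exact sigma_mono (le_max_right n m1) hPs
  -- σ bound for D
  set K := max K1 (max N0 1) with hK
  have hKD : ∀ m : ℕ, 1 ≤ m → (m : ℤ) ≤ K * cnt D m := by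
    intro m hm
    rcases le_or_gt N0 m with hmN | hmN
    · have h1 := hK1 m hmN
      have h2 : cnt C m ≤ cnt D m := by
        apply cnt_le_of_scale hg0 _ m
        intro z hzC hz1
        have hdvd : g0 ∣ z := sigma_dvd hdvdA (by exact hzC)
        refine ⟨hdvd, ?_⟩
        right; left
        obtain ⟨w, rfl⟩ := hdvd
        rw [Nat.mul_div_cancel_left w (by omega)]
        exact sigma_mono (le_max_left n m1) hzC
      have hKK1 : (K1 : ℤ) ≤ K := by
        have : K1 ≤ K := le_max_left _ _
        exact_mod_cast this
      have hc2 : (cnt C m : ℤ) ≤ cnt D m := by exact_mod_cast h2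
      have hcnn : (0:ℤ) ≤ cnt C m := by positivity
      have hdnn : (0:ℤ) ≤ cnt D m := by positivity
      calc (m:ℤ) ≤ K1 * cnt C m := h1
        _ ≤ K1 * cnt D m := by
            apply mul_le_mul_of_nonneg_left hc2
            positivity
        _ ≤ K * cnt D m := mul_le_mul_of_nonneg_right hKK1 hdnn
    · have h1 : 1 ≤ cnt D m := one_le_cnt h1D hm
      have h2 : (m : ℤ) ≤ K := by
        have : m ≤ K := by
          have : N0 ≤ K := le_trans (le_max_left _ _) (le_max_right _ _)
          omega
        exact_mod_cast this
      have h3 : (1:ℤ) ≤ cnt D m := by exact_mod_cast h1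
      calc (m:ℤ) ≤ K := h2
        _ = K * 1 := by ring
        _ ≤ K * cnt D m := by
            apply mul_le_mul_of_nonneg_left h3
            positivity
  have hK1' : 1 ≤ K := le_trans hK11 (le_max_left _ _)
  obtain ⟨k0, hk01, hk0⟩ := sumIter_half h0D hK1' hKD
  -- every natural is in sumIter D (k0 + k0)
  have hall : ∀ x : ℕ, x ∈ sumIter D (k0 + k0) := by
    intro x
    rw [sumIter_add]
    exact schnirelmann_complete (zero_mem_sumIter h0D k0) hk0 x
  -- structure
  have hstruct := sumIter_struct A g0 s m0 D (fun d hd => hd) (k0 + k0)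
  refine ⟨g0, s, k0 + k0, (k0 + k0) * m0, hg0, ?_⟩
  intro x hx
  rcases hstruct x (hall x) with rfl | ⟨c, hc, hmem⟩
  · omega
  · exact ⟨c, hc, hmem⟩

abbrev Defbl (A : Set ℕ) {α : Type} (s : Set (α → ℤ)) : Prop :=
  @Set.Definable ℤ Set.univ LZA (zStructure A) α s

def addT {α} (t1 t2 : LZA.Term α) : LZA.Term α :=
  Term.func (l := 2) (Unit.unit : LZA.Functions 2) ![t1, t2]

def zeroT {α} : LZA.Term α := Term.func (l := 0) (Unit.unit : LZA.Functions 0) ![]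

def nsmulT {α} : ℕ → LZA.Term α → LZA.Term α
  | 0, _ => zeroT
  | k+1, t => addT (nsmulT k t) t

def AZ (A : Set ℕ) : Set ℤ := {z : ℤ | ∃ m ∈ A, (m : ℤ) = z}

def AZk (A : Set ℕ) : ℕ → Set ℤ
  | 0 => {0}
  | k+1 => AZk A k + AZ A

def relA : LZA.Relations 1 := Unit.unit

lemma def_AZ (A : Set ℕ) : Defbl A {v : Fin 1 → ℤ | v 0 ∈ AZ A} := by
  letI := zStructure A
  show Set.Definable Set.univ LZA {v : Fin 1 → ℤ | v 0 ∈ AZ A}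
  rw [Set.definable_iff_exists_formula_sum]
  refine ⟨relA.formula₁ (Term.var (Sum.inr 0)), ?_⟩
  ext v
  rw [Set.mem_setOf_eq, Set.mem_setOf_eq, Formula.realize_rel₁]
  exact Iff.rfl

lemma def_singleton (A : Set ℕ) (j : ℤ) : Defbl A {v : Fin 1 → ℤ | v 0 = j} := by
  letI := zStructure A
  show Set.Definable Set.univ LZA {v : Fin 1 → ℤ | v 0 = j}
  rw [Set.definable_iff_exists_formula_sum]
  refine ⟨Term.equal (Term.var (Sum.inr 0)) (Term.var (Sum.inl ⟨j, Set.mem_univ j⟩)), ?_⟩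
  ext v
  rw [Set.mem_setOf_eq, Set.mem_setOf_eq, Formula.realize_equal]
  exact Iff.rfl

lemma def_addset (A : Set ℕ) (S T : Set ℤ) (hS : Defbl A {v : Fin 1 → ℤ | v 0 ∈ S})
    (hT : Defbl A {v : Fin 1 → ℤ | v 0 ∈ T}) :
    Defbl A {v : Fin 1 → ℤ | v 0 ∈ S + T} := by
  letI := zStructure A
  have h1 : Set.Definable Set.univ LZA {w : Fin 3 → ℤ | w 1 ∈ S} :=
    hS.preimage_comp (fun _ : Fin 1 => (1 : Fin 3))
  have h2 : Set.Definable Set.univ LZA {w : Fin 3 → ℤ | w 2 ∈ T} :=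
    hT.preimage_comp (fun _ : Fin 1 => (2 : Fin 3))
  have h3 : Set.Definable Set.univ LZA {w : Fin 3 → ℤ | w 0 = w 1 + w 2} := by
    rw [Set.definable_iff_exists_formula_sum]
    refine ⟨Term.equal (Term.var (Sum.inr 0))
      (addT (Term.var (Sum.inr 1)) (Term.var (Sum.inr 2))), ?_⟩
    ext w
    rw [Set.mem_setOf_eq, Set.mem_setOf_eq, Formula.realize_equal]
    exact Iff.rfl
  have h4 := ((h3.inter h1).inter h2).image_comp (fun _ : Fin 1 => (0 : Fin 3))
  show Set.Definable Set.univ LZA {v : Fin 1 → ℤ | v 0 ∈ S + T}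
  convert h4 using 1
  ext v
  simp only [Set.mem_image, Set.mem_inter_iff, Set.mem_setOf_eq]
  constructor
  · rintro ⟨a, haS, b, hbT, hab⟩
    refine ⟨![v 0, a, b], ⟨⟨?_, ?_⟩, ?_⟩, ?_⟩
    · simp [← hab]
    · simpa using haS
    · simpa using hbT
    · funext i
      fin_cases i
      simp
  · rintro ⟨w, ⟨⟨hw0, hw1⟩, hw2⟩, rfl⟩
    exact ⟨w 1, hw1, w 2, hw2, by simp [← hw0]⟩

lemma def_affine (A : Set ℕ) (S : Set ℤ) (hS : Defbl A {v : Fin 1 → ℤ | v 0 ∈ S})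
    (g0 : ℕ) (E : ℤ) : Defbl A {v : Fin 1 → ℤ | (g0 : ℤ) * v 0 + E ∈ S} := by
  letI := zStructure A
  have hreal : ∀ (k : ℕ) (β : Type) (v : β → ℤ) (t : LZA.Term β),
      Term.realize v (nsmulT k t) = k * Term.realize v t := by
    intro k β v t
    induction k with
    | zero =>
      show (0:ℤ) = ((0:ℕ):ℤ) * _
      simp
    | succ k ih =>
      show Term.realize v (nsmulT k t) + Term.realize v t = _
      rw [ih]
      push_cast
      ring
  have h1 : Set.Definable Set.univ LZA {w : Fin 2 → ℤ | w 1 ∈ S} :=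
    hS.preimage_comp (fun _ : Fin 1 => (1 : Fin 2))
  have h2 : Set.Definable Set.univ LZA {w : Fin 2 → ℤ | w 1 = (g0 : ℤ) * w 0 + E} := by
    rw [Set.definable_iff_exists_formula_sum]
    refine ⟨Term.equal (Term.var (Sum.inr 1))
      (addT (nsmulT g0 (Term.var (Sum.inr 0))) (Term.var (Sum.inl ⟨E, Set.mem_univ E⟩))), ?_⟩
    ext w
    rw [Set.mem_setOf_eq, Set.mem_setOf_eq, Formula.realize_equal]
    have hterm : Term.realize (Sum.elim (Subtype.val) w)
        (addT (nsmulT g0 (Term.var (Sum.inr 0)))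
          (Term.var (Sum.inl (⟨E, Set.mem_univ E⟩ : (Set.univ : Set ℤ)))))
        = (g0 : ℤ) * w 0 + E := by
      show Term.realize (Sum.elim (Subtype.val) w) (nsmulT g0 (Term.var (Sum.inr 0)))
          + Term.realize (Sum.elim (Subtype.val) w)
            (Term.var (Sum.inl (⟨E, Set.mem_univ E⟩ : (Set.univ : Set ℤ)))) = _
      rw [hreal]
      rfl
    rw [hterm]
    exact Iff.rfl
  have h4 := (h1.inter h2).image_comp (fun _ : Fin 1 => (0 : Fin 2))
  show Set.Definable Set.univ LZA {v : Fin 1 → ℤ | (g0 : ℤ) * v 0 + E ∈ S}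
  convert h4 using 1
  ext v
  simp only [Set.mem_image, Set.mem_inter_iff, Set.mem_setOf_eq]
  constructor
  · rintro hv
    refine ⟨![v 0, (g0:ℤ) * v 0 + E], ⟨by simpa using hv, by simp⟩, ?_⟩
    funext i
    fin_cases i
    simp
  · rintro ⟨w, ⟨hw1, hw2⟩, rfl⟩
    simpa [← hw2] using hw1

lemma AZk_eq (A : Set ℕ) : ∀ k : ℕ, AZk A k = {z : ℤ | ∃ w ∈ kFoldN A k, (w : ℤ) = z} := by
  intro k
  induction k with
  | zero =>
    rw [kFoldN_zero]
    ext z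
    simp [AZk, eq_comm]
  | succ k ih =>
    rw [show AZk A (k+1) = AZk A k + AZ A from rfl, kFoldN_succ, ih]
    ext z
    constructor
    · rintro ⟨u, hu, a, ha, rfl⟩
      obtain ⟨w, hw, rfl⟩ := hu
      obtain ⟨m, hm, rfl⟩ := ha
      exact ⟨w + m, ⟨w, hw, m, hm, rfl⟩, by push_cast; ring⟩
    · rintro ⟨w, ⟨u, hu, a, ha, rfl⟩, rfl⟩
      exact ⟨(u : ℤ), ⟨u, hu, rfl⟩, (a : ℤ), ⟨a, ha, rfl⟩, by push_cast; ring⟩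

lemma def_AZk (A : Set ℕ) (k : ℕ) : Defbl A {v : Fin 1 → ℤ | v 0 ∈ AZk A k} := by
  induction k with
  | zero =>
    letI := zStructure A
    show Set.Definable Set.univ LZA {v : Fin 1 → ℤ | v 0 ∈ AZk A 0}
    have hs : {v : Fin 1 → ℤ | v 0 ∈ AZk A 0} = {v : Fin 1 → ℤ | v 0 = (0:ℤ)} := by
      ext v
      simp [AZk]
    rw [hs]
    exact def_singleton A 0
  | succ k ih => exact def_addset A (AZk A k) (AZ A) ih (def_AZ A)

lemma def_PZ (A : Set ℕ) (M : ℕ) :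
    Defbl A {v : Fin 1 → ℤ | v 0 ∈ {z : ℤ | ∃ w ∈ sigmaSumN M A, (w : ℤ) = z}} := by
  letI := zStructure A
  have hset : {v : Fin 1 → ℤ | v 0 ∈ {z : ℤ | ∃ w ∈ sigmaSumN M A, (w : ℤ) = z}}
      = ⋃ k ∈ Finset.Icc 1 M, {v : Fin 1 → ℤ | v 0 ∈ AZk A k} := by
    ext v
    simp only [Set.mem_setOf_eq, Set.mem_iUnion, AZk_eq, Finset.mem_Icc]
    constructor
    · rintro ⟨w, hw, hweq⟩
      rw [mem_sigmaSumN] at hw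
      obtain ⟨k, h1, h2, h3⟩ := hw
      exact ⟨k, ⟨h1, h2⟩, w, h3, hweq⟩
    · rintro ⟨k, ⟨h1, h2⟩, w, hw, hweq⟩
      exact ⟨w, mem_sigmaSumN.2 ⟨k, h1, h2, hw⟩, hweq⟩
  rw [hset]
  exact Set.definable_biUnion_finset (fun k => def_AZk A k) _

lemma def_part (A : Set ℕ) (g0 s KK M : ℕ) (hg0 : 1 ≤ g0)
    (hfact : ∀ x : ℕ, 1 ≤ x → ∃ c, c ≤ KK ∧ g0 * x + g0 * (c * s) ∈ sigmaSumN M A) :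
    @Set.Definable₁ ℤ (Set.univ : Set ℤ) LZA (zStructure A) {x : ℤ | 0 ≤ x} := by
  letI := zStructure A
  set PZ : Set ℤ := {z : ℤ | ∃ w ∈ sigmaSumN M A, (w : ℤ) = z} with hPZ
  set B : ℕ := KK * s with hB
  -- the target set identity
  have key : {v : Fin 1 → ℤ | v 0 ∈ {x : ℤ | 0 ≤ x}}
      = (⋃ j ∈ Finset.range (B + 2), {v : Fin 1 → ℤ | v 0 = (j : ℤ)})
        ∪ (⋃ c ∈ Finset.range (KK + 1),
            {v : Fin 1 → ℤ | (g0 : ℤ) * v 0 + ((g0 * (c * s) : ℕ) - (g0 : ℤ) * (B + 1)) ∈ PZ}) := by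
    ext v
    simp only [Set.mem_setOf_eq, Set.mem_union, Set.mem_iUnion, Finset.mem_range]
    constructor
    · intro hv
      rcases le_or_gt (v 0) (B + 1) with hle | hgt
      · left
        refine ⟨(v 0).toNat, ?_, ?_⟩
        · omega
        · rw [Int.toNat_of_nonneg hv]
      · right
        set x : ℕ := (v 0 - (B + 1)).toNat with hx
        have hx1 : 1 ≤ x := by omega
        obtain ⟨c, hc, hmem⟩ := hfact x hx1
        refine ⟨c, by omega, ?_⟩
        refine ⟨g0 * x + g0 * (c * s), hmem, ?_⟩
        have hxval : (x : ℤ) = v 0 - (B + 1) := by omega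
        push_cast
        rw [hxval]
        ring
    · rintro (⟨j, hj, hv⟩ | ⟨c, hc, w, hw, heq⟩)
      · rw [hv]; positivity
      · -- w : ℕ so nonneg
        have hwnn : (0 : ℤ) ≤ (w : ℤ) := by positivity
        have hcs : (g0 : ℤ) * ((c : ℤ) * s) ≤ (g0 : ℤ) * B := by
          have h1 : (c : ℤ) * s ≤ (B : ℤ) := by
            have : c * s ≤ B := by
              rw [hB]
              exact Nat.mul_le_mul_right s (by omega)
            exact_mod_cast this
          apply mul_le_mul_of_nonneg_left h1
          positivity
        have hg0' : (1 : ℤ) ≤ (g0 : ℤ) := by exact_mod_cast hg0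
        have hlow : (g0 : ℤ) * 1 ≤ (g0 : ℤ) * v 0 := by
          have expand : (g0 : ℤ) * v 0 = (w : ℤ) + (g0 : ℤ) * (B + 1) - (g0 : ℤ) * ((c : ℤ) * s) := by
            have hcast : ((g0 * (c * s) : ℕ) : ℤ) = (g0 : ℤ) * ((c : ℤ) * s) := by push_cast; ring
            linear_combination -heq - hcast
          rw [expand]
          have : (g0 : ℤ) * (B + 1) = (g0 : ℤ) * B + g0 := by ring
          linarith
        have : (1 : ℤ) ≤ v 0 := le_of_mul_le_mul_left hlow (by omega)
        linarith
  show Set.Definable Set.univ LZA {v : Fin 1 → ℤ | v 0 ∈ {x : ℤ | 0 ≤ x}}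
  rw [key]
  apply Set.Definable.union
  · exact Set.definable_biUnion_finset (f := fun j : ℕ => {v : Fin 1 → ℤ | v 0 = (j : ℤ)})
      (fun j => def_singleton A ((j : ℕ) : ℤ)) _
  · exact Set.definable_biUnion_finset
      (fun c => def_affine A PZ (def_PZ A M) g0 _) _


/-- If `{x ∈ ℤ : x ≥ 0}` is not definable with parameters in the structure
`(ℤ, +, 0, A)`, then `A` is `δ̲`-sparse: every `Σ_n(A)` has lower asymptotic density `0`. -/
theorem lowerDensity_sparse_of_not_definable_nonneg (A : Set ℕ)
    (h : ¬ @Set.Definable₁ ℤ (Set.univ : Set ℤ) LZA (zStructure A) {x : ℤ | 0 ≤ x}) :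
    ∀ n : ℕ, 1 ≤ n → lowerDensity (sigmaSumN n A) = 0 := by
  intro n hn
  by_contra hne
  obtain ⟨g0, s, KK, M, hg0, hfact⟩ := main_comb A n hn hne
  exact h (def_part A g0 s KK M hg0 hfact)
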